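/- For all integers n ≥ m ≥ 1, one has the closed formula f(m,n) = Σ_{k=1}^{m−1} (−1)^{m+k+1} · binom(m, k+1) · k^n; equivalently, χ(m,n) = 1 + (−1)^{n−m} · Σ_{k=1}^{m−1} (−1)^{m+k+1} · binom(m, k+1) · k^n. -/

import Mathlib

open Finset

-- helper: product of ±1 indicator
lemma prod_if_pow {α : Type*} [Fintype α] (p : α → Prop) [DecidablePred p] (a : ℤ) :
    ∏ x, (if p x then a else 1) = a ^ #(Finset.univ.filter p) := by
  rw [Finset.prod_ite, Finset.prod_const, Finset.prod_const_one, mul_one]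

def wt (m : ℕ) : Option (Fin m) → ℤ := fun o => if o = none then 1 else -1

lemma weight_eq (m n : ℕ) (c : Fin n → Option (Fin m)) :
    (-1:ℤ) ^ (∑ i, #(Finset.univ.filter fun x => c x = some i)) =
      ∏ x, wt m (c x) := by
  unfold wt
  classical
  rw [← Finset.prod_pow_eq_pow_sum]
  have h1 : ∀ i : Fin m, (-1:ℤ) ^ #(Finset.univ.filter fun x => c x = some i) =
      ∏ x, (if c x = some i then (-1:ℤ) else 1) := fun i => (prod_if_pow _ _).symm
  simp_rw [h1]
  rw [Finset.prod_comm]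
  refine Finset.prod_congr rfl fun x _ => ?_
  cases h : c x with
  | none => simp [h]
  | some j => simp [h, Finset.prod_ite_eq]

open Classical in
lemma countB (m n : ℕ) (T : Finset (Fin m)) :
    (∑ η : Fin m → Finset (Fin n),
      if (∀ i j : Fin m, i ≠ j → Disjoint (η i) (η j)) ∧ (∀ i ∉ T, η i = ∅)
      then (-1:ℤ) ^ (∑ i, (η i).card) else 0) = (1 - (T.card : ℤ)) ^ n := by
  classical
  rw [← Finset.sum_filter]
  have key : ∑ η ∈ Finset.univ.filter (fun η : Fin m → Finset (Fin n) =>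
        (∀ i j : Fin m, i ≠ j → Disjoint (η i) (η j)) ∧ (∀ i ∉ T, η i = ∅)),
        (-1:ℤ) ^ (∑ i, (η i).card) =
      ∑ c ∈ Fintype.piFinset (fun _ : Fin n => insert none (T.image some)),
        ∏ x, wt m (c x) := by
    refine Finset.sum_bij'
      (fun η _ => fun x => if h : ∃ j, x ∈ η j then some h.choose else none)
      (fun c _ => fun i => Finset.univ.filter fun x => c x = some i)
      ?_ ?_ ?_ ?_ ?_
    · -- maps into piFinset
      intro η hη
      simp only [Finset.mem_filter] at hη
      obtain ⟨-, hPD, hsupp⟩ := hη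
      rw [Fintype.mem_piFinset]
      intro x
      by_cases h : ∃ j, x ∈ η j
      · simp only [h, dif_pos]
        have hx := h.choose_spec
        have : h.choose ∈ T := by
          by_contra hc
          rw [hsupp _ hc] at hx
          exact absurd hx (Finset.notMem_empty x)
        simp only [Finset.mem_insert, Finset.mem_image]
        exact Or.inr ⟨h.choose, this, rfl⟩
      · simp [h]
    · -- inverse maps into filter
      intro c hc
      rw [Fintype.mem_piFinset] at hc
      simp only [Finset.mem_filter, Finset.mem_univ, true_and]
      constructor
      · intro i j hij
        rw [Finset.disjoint_left]
        intro x hx hx'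
        simp only [Finset.mem_filter] at hx hx'
        rw [hx.2] at hx'
        exact hij (Option.some_injective _ hx'.2.symm ▸ rfl)
      · intro i hi
        rw [Finset.filter_eq_empty_iff]
        intro x _ hx
        have := hc x
        rw [hx] at this
        simp only [Finset.mem_insert, Finset.mem_image] at this
        rcases this with h | ⟨j, hj, hji⟩
        · exact Option.some_ne_none _ h
        · exact hi (Option.some_injective _ hji ▸ hj)
    · -- left inverse
      intro η hη
      simp only [Finset.mem_filter] at hη
      obtain ⟨-, hPD, -⟩ := hη
      funext i
      ext x
      simp only [Finset.mem_filter, Finset.mem_univ, true_and]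
      constructor
      · intro hx
        by_cases h : ∃ j, x ∈ η j
        · simp only [h, dif_pos] at hx
          have hx' := h.choose_spec
          have : h.choose = i := Option.some_injective _ hx
          rwa [← this]
        · simp [h] at hx
      · intro hx
        have h : ∃ j, x ∈ η j := ⟨i, hx⟩
        simp only [h, dif_pos]
        congr 1
        by_contra hne
        have := hPD _ _ hne
        rw [Finset.disjoint_left] at this
        exact this h.choose_spec hx
    · -- right inverse
      intro c _
      funext x
      by_cases h : ∃ j, x ∈ Finset.univ.filter fun y => c y = some j
      · simp only [h, dif_pos]
        have := h.choose_spec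
        exact ((Finset.mem_filter.1 this).2).symm
      · simp only [h, dif_neg]
        cases hc : c x with
        | none => rfl
        | some j => exact absurd ⟨j, by simp [hc]⟩ h
    · -- weights agree
      intro η hη
      simp only [Finset.mem_filter] at hη
      obtain ⟨-, hPD, -⟩ := hη
      rw [← weight_eq]
      congr 1
      refine Finset.sum_congr rfl fun i _ => ?_
      congr 1
      ext x
      simp only [Finset.mem_filter, Finset.mem_univ, true_and]
      constructor
      · intro hx
        have h : ∃ j, x ∈ η j := ⟨i, hx⟩
        simp only [h, dif_pos]
        congr 1
        by_contra hne
        have := hPD _ _ hne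
        rw [Finset.disjoint_left] at this
        exact this h.choose_spec hx
      · intro hx
        by_cases h : ∃ j, x ∈ η j
        · simp only [h, dif_pos] at hx
          have : h.choose = i := Option.some_injective _ hx
          rw [← this]; exact h.choose_spec
        · simp [h] at hx
  rw [key, Finset.sum_prod_piFinset]
  have hnone : (none : Option (Fin m)) ∉ T.image some := by simp
  have inner : ∑ o ∈ insert none (T.image some),
      wt m o = 1 - (T.card : ℤ) := by
    unfold wt
    rw [Finset.sum_insert hnone, if_pos rfl, Finset.sum_image (fun a _ b _ h => Option.some_injective _ h),
      Finset.sum_congr rfl (fun i _ => if_neg (by simp)), Finset.sum_const]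
    ring
  rw [Finset.prod_congr rfl fun x _ => inner]
  rw [Finset.prod_const, Finset.card_univ, Fintype.card_fin]

open Classical in
noncomputable def Nset (m n : ℕ) (T : Finset (Fin m)) : ℤ :=
  ∑ η : Fin m → Finset (Fin n),
    if (∀ i j : Fin m, i ≠ j → Disjoint (η i) (η j)) ∧ (∀ i, (η i).Nonempty ↔ i ∈ T)
    then (-1:ℤ) ^ (∑ i, (η i).card) else 0

open Classical in
lemma B_decomp (m n : ℕ) (T : Finset (Fin m)) :
    ∑ S ∈ T.powerset, Nset m n S =
      ∑ η : Fin m → Finset (Fin n),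
        if (∀ i j : Fin m, i ≠ j → Disjoint (η i) (η j)) ∧ (∀ i ∉ T, η i = ∅)
        then (-1:ℤ) ^ (∑ i, (η i).card) else 0 := by
  classical
  unfold Nset
  rw [Finset.sum_comm]
  refine Finset.sum_congr rfl fun η _ => ?_
  by_cases hPD : ∀ i j : Fin m, i ≠ j → Disjoint (η i) (η j)
  · by_cases hsupp : ∀ i ∉ T, η i = ∅
    · have hmem : (Finset.univ.filter fun i => (η i).Nonempty) ∈ T.powerset := by
        rw [Finset.mem_powerset]
        intro i hi
        simp only [Finset.mem_filter, Finset.mem_univ, true_and] at hi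
        by_contra hc
        rw [hsupp _ hc] at hi
        exact Finset.not_nonempty_empty hi
      have hzero : ∀ S ∈ T.powerset, S ≠ (Finset.univ.filter fun i => (η i).Nonempty) →
          (if (∀ i j : Fin m, i ≠ j → Disjoint (η i) (η j)) ∧ (∀ i, (η i).Nonempty ↔ i ∈ S)
            then (-1:ℤ) ^ (∑ i, (η i).card) else 0) = 0 := by
        intro S hS hne
        refine if_neg ?_
        rintro ⟨-, hiff⟩
        apply hne
        ext i
        simp only [Finset.mem_filter, Finset.mem_univ, true_and]
        exact (hiff i).symm
      rw [Finset.sum_eq_single_of_mem _ hmem hzero,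
        if_pos ⟨hPD, fun i => by simp only [Finset.mem_filter, Finset.mem_univ, true_and]⟩,
        if_pos ⟨hPD, hsupp⟩]
    · rw [if_neg (fun h => hsupp h.2)]
      refine Finset.sum_eq_zero fun S hS => if_neg ?_
      rintro ⟨-, hiff⟩
      apply hsupp
      intro i hi
      rw [← Finset.not_nonempty_iff_eq_empty]
      intro hne
      exact hi (Finset.mem_powerset.1 hS ((hiff i).1 hne))
  · rw [if_neg (fun h => hPD h.1)]
    exact Finset.sum_eq_zero fun S _ => if_neg (fun h => hPD h.1)

lemma Nuniv (m n : ℕ) :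
    Nset m n Finset.univ =
      ∑ T ∈ (Finset.univ : Finset (Fin m)).powerset,
        (-1:ℤ) ^ (m - T.card) * (1 - (T.card : ℤ)) ^ n := by
  classical
  have h1 : ∀ T : Finset (Fin m), (1 - (T.card : ℤ)) ^ n = ∑ S ∈ T.powerset, Nset m n S :=
    fun T => by rw [B_decomp, countB]
  simp_rw [h1, Finset.mul_sum]
  rw [Finset.sum_comm' (t' := (Finset.univ : Finset (Fin m)).powerset)
    (s' := fun S => (Finset.univ : Finset (Fin m)).powerset.filter fun T => S ⊆ T)
    (by intro T S; simp only [Finset.mem_powerset, Finset.mem_filter]; tauto)]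
  have inner : ∀ S : Finset (Fin m),
      ∑ T ∈ (Finset.univ : Finset (Fin m)).powerset.filter (fun T => S ⊆ T),
        (-1:ℤ) ^ (m - T.card) * Nset m n S =
      (if S = Finset.univ then 1 else 0) * Nset m n S := by
    intro S
    rw [← Finset.sum_mul]
    congr 1
    have step : ∑ T ∈ (Finset.univ : Finset (Fin m)).powerset.filter (fun T => S ⊆ T),
        (-1:ℤ) ^ (m - T.card) = ∑ U ∈ Sᶜ.powerset, (-1:ℤ) ^ U.card := by
      refine Finset.sum_bij' (fun T _ => Tᶜ) (fun U _ => Uᶜ) ?_ ?_ ?_ ?_ ?_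
      · intro T hT
        simp only [Finset.mem_filter, Finset.mem_powerset] at hT
        rw [Finset.mem_powerset]
        exact Finset.compl_subset_compl.2 hT.2
      · intro U hU
        rw [Finset.mem_powerset] at hU
        simp only [Finset.mem_filter, Finset.mem_powerset]
        exact ⟨Finset.subset_univ _, by rwa [← Finset.compl_subset_compl, compl_compl] at hU⟩
      · intro T _; exact compl_compl T
      · intro U _; exact compl_compl U
      · intro T _
        congr 1
        rw [Finset.card_compl, Fintype.card_fin]
    rw [step, Finset.sum_powerset_neg_one_pow_card]
    by_cases hS : S = Finset.univ
    · simp [hS]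
    · rw [if_neg (fun h => hS (by rwa [Finset.compl_eq_empty_iff] at h)), if_neg hS]
  simp_rw [inner]
  have hmem : (Finset.univ : Finset (Fin m)) ∈ (Finset.univ : Finset (Fin m)).powerset := by simp
  rw [Finset.sum_eq_single_of_mem _ hmem (fun S _ hne => by rw [if_neg hne, zero_mul]),
    if_pos rfl, one_mul]

open Finset in
open Classical in
/-- The (non-reduced) Euler characteristic of `Hom(K_m, K_n)`:
`χ(m,n) = Σ_η (−1)^{(Σ_i |η(i)|) − m}`, where `η` ranges over all functions from
`{1,…,m}` to nonempty subsets of `{1,…,n}` with pairwise disjoint values. -/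
noncomputable def homEulerChar (m n : ℕ) : ℤ :=
  ∑ η : Fin m → Finset (Fin n),
    if (∀ i, (η i).Nonempty) ∧ (∀ i j : Fin m, i ≠ j → Disjoint (η i) (η j))
    then (-1 : ℤ) ^ ((∑ i, (η i).card) - m) else 0

/-- `f(m,n) = (−1)^{n−m}·(χ(m,n) − 1)`, the number of spheres in the wedge
decomposition of `Hom(K_m, K_n)`. -/
noncomputable def sphereCount (m n : ℕ) : ℤ :=
  (-1 : ℤ) ^ (n - m) * (homEulerChar m n - 1)


lemma homEuler_eq (m n : ℕ) : homEulerChar m n = (-1:ℤ)^m * Nset m n Finset.univ := by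
  classical
  unfold homEulerChar Nset
  rw [Finset.mul_sum]
  refine Finset.sum_congr rfl fun η _ => ?_
  by_cases h : (∀ i, (η i).Nonempty) ∧ (∀ i j : Fin m, i ≠ j → Disjoint (η i) (η j))
  · rw [if_pos h, if_pos ⟨h.2, fun i => by simp [h.1 i]⟩]
    have hm : m ≤ ∑ i, (η i).card := by
      calc m = ∑ _i : Fin m, 1 := by simp
      _ ≤ _ := Finset.sum_le_sum fun i _ => Finset.card_pos.2 (h.1 i)
    rw [← pow_add, show m + ((∑ i, (η i).card)) = ((∑ i, (η i).card) - m) + 2 * m by omega,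
      pow_add, pow_mul]
    norm_num
  · rw [if_neg h, if_neg ?_, mul_zero]
    rintro ⟨hPD, hiff⟩
    exact h ⟨fun i => (hiff i).2 (Finset.mem_univ i), hPD⟩


/-- for `n ≥ m ≥ 1`,
`f(m,n) = Σ_{k=1}^{m−1} (−1)^{m+k+1} · C(m, k+1) · k^n`. -/
theorem sphereCount_closed_formula (m n : ℕ) (hm : 1 ≤ m) (hmn : m ≤ n) :
    sphereCount m n =
      ∑ k ∈ Finset.Icc 1 (m - 1),
        (-1 : ℤ) ^ (m + k + 1) * (m.choose (k + 1) : ℤ) * (k : ℤ) ^ n := by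
  classical
  have hE : homEulerChar m n =
      (-1:ℤ)^m * ∑ j ∈ Finset.range (m + 1),
        (m.choose j : ℤ) * ((-1:ℤ)^(m - j) * (1 - (j:ℤ))^n) := by
    rw [homEuler_eq, Nuniv,
      Finset.sum_powerset_apply_card (f := fun j => (-1:ℤ)^(m - j) * (1 - (j:ℤ))^n)]
    simp only [Finset.card_univ, Fintype.card_fin, nsmul_eq_mul]
  have hsplit : ∑ j ∈ Finset.range (m + 1),
      (m.choose j : ℤ) * ((-1:ℤ)^(m - j) * (1 - (j:ℤ))^n) =
      (∑ k ∈ Finset.range m,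
        (m.choose (k+1) : ℤ) * ((-1:ℤ)^(m - (k+1)) * (1 - ((k:ℤ)+1))^n)) + (-1:ℤ)^m := by
    rw [Finset.sum_range_succ']
    push_cast
    norm_num
  have hE1 : homEulerChar m n - 1 =
      (-1:ℤ)^m * ∑ k ∈ Finset.range m,
        (m.choose (k+1) : ℤ) * ((-1:ℤ)^(m - (k+1)) * (1 - ((k:ℤ)+1))^n) := by
    rw [hE, hsplit, mul_add, ← pow_add]
    rw [show (-1:ℤ)^(m+m) = 1 from Even.neg_one_pow ⟨m, rfl⟩]
    ring
  have hrange : Finset.range m = insert 0 (Finset.Icc 1 (m - 1)) := by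
    ext x
    simp only [Finset.mem_range, Finset.mem_insert, Finset.mem_Icc]
    omega
  rw [sphereCount, hE1, hrange, Finset.sum_insert (by simp)]
  have h00 : (1 - (((0:ℕ):ℤ)+1))^n = 0 := by
    rw [show (1 - (((0:ℕ):ℤ)+1)) = 0 by norm_num]
    exact zero_pow (by omega)
  rw [h00]
  simp only [mul_zero, zero_add, Finset.mul_sum]
  refine Finset.sum_congr rfl fun k hk => ?_
  obtain ⟨hk1, hk2⟩ := Finset.mem_Icc.1 hk
  have hkm : k + 1 ≤ m := by omega
  have e1 : (1 - ((k:ℤ)+1))^n = (-1:ℤ)^n * (k:ℤ)^n := by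
    rw [show (1 - ((k:ℤ)+1)) = -(k:ℤ) by ring, neg_pow]
  have e2 : (-1:ℤ)^(m-(k+1)) = (-1:ℤ)^(m+k+1) := by
    rw [show m+k+1 = (m-(k+1)) + 2*(k+1) from by omega, pow_add, pow_mul]
    norm_num
  have e3 : (-1:ℤ)^(n-m) * (-1:ℤ)^m * (-1:ℤ)^n = 1 := by
    rw [← pow_add, Nat.sub_add_cancel hmn, ← pow_add]
    exact Even.neg_one_pow ⟨n, rfl⟩
  rw [e1, e2]
  calc (-1:ℤ)^(n-m) * ((-1:ℤ)^m * ((m.choose (k+1) : ℤ) * ((-1:ℤ)^(m+k+1) * ((-1:ℤ)^n * (k:ℤ)^n))))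
      = ((-1:ℤ)^(n-m) * (-1:ℤ)^m * (-1:ℤ)^n) * ((-1:ℤ)^(m+k+1) * (m.choose (k+1) : ℤ) * (k:ℤ)^n) := by
        ring
    _ = (-1:ℤ)^(m+k+1) * (m.choose (k+1) : ℤ) * (k:ℤ)^n := by rw [e3, one_mul]
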